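/- arXiv:1006.3210 — 3 statements merged into one kernel-verified Lean document; each statement's English description precedes it below -/
import Mathlib

section
/- For every natural number n, applying the product of operators (X + q^{n-1} s D_q)(X + q^{n-2} s D_q) ⋯ (X + s D_q) (with the factor (X + s D_q) acting first) to the constant polynomial 1 yields the polynomial h_n(x,s). -/
noncomputable section

/-- The field `ℚ(q,s)` of rational functions in two indeterminates. -/
abbrev F : Type := FractionRing (MvPolynomial (Fin 2) ℚ)

/-- The indeterminate `q`. -/
def q : F := algebraMap (MvPolynomial (Fin 2) ℚ) F (MvPolynomial.X 0)

/-- The indeterminate `s`. -/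
def s : F := algebraMap (MvPolynomial (Fin 2) ℚ) F (MvPolynomial.X 1)

/-- The q-integer `[n]_q = 1 + q + ⋯ + q^{n-1}`. -/
def qInt (n : ℕ) : F := ∑ i ∈ Finset.range n, q ^ i

/-- The q-factorial `[n]_q! = ∏_{k=1}^n [k]_q`. -/
def qFact (n : ℕ) : F := ∏ k ∈ Finset.range n, qInt (k + 1)

/-- The q-binomial coefficient `[n choose k]_q = [n]_q!/([k]_q! [n-k]_q!)`. -/
def qBinom (n k : ℕ) : F := qFact n / (qFact k * qFact (n - k))

/-- The operator `X` of multiplication by `x` on `F[x]`. -/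
def Xop : Module.End F (Polynomial F) := LinearMap.mulLeft F Polynomial.X

/-- Division by `x` (discarding the constant term), as a linear map. -/
def divXL : Polynomial F →ₗ[F] Polynomial F where
  toFun := Polynomial.divX
  map_add' p r := Polynomial.divX_add
  map_smul' a p := by
    ext n
    simp [Polynomial.coeff_divX, Polynomial.coeff_smul]

/-- The q-derivative `D_q f(x) = (f(qx) - f(x))/((q-1)x)`; it is the F-linear
operator on `F[x]` determined by `D_q x^n = [n]_q x^{n-1}`. -/
def Dq : Module.End F (Polynomial F) :=
  (q - 1)⁻¹ •
    (divXL ∘ₗ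
      ((Polynomial.aeval (Polynomial.C q * Polynomial.X)).toLinearMap - LinearMap.id))

/-- The polynomials `h_n(x,t) = Σ_j q^{j²} t^j [n]_q!/((1+q)⋯(1+q^j)·[j]_q!·[n-2j]_q!)
x^{n-2j}` (the parameter `t` will be specialized to `s` or `q²s`). -/
def h (t : F) (n : ℕ) : Polynomial F :=
  ∑ j ∈ Finset.range (n / 2 + 1),
    Polynomial.C (q ^ (j ^ 2) * t ^ j * qFact n /
        ((∏ i ∈ Finset.range j, (1 + q ^ (i + 1))) * qFact j * qFact (n - 2 * j))) *
      Polynomial.X ^ (n - 2 * j)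


/-- `F(n) = (X + q^{n-1} s D_q)(X + q^{n-2} s D_q) ⋯ (X + s D_q)`,
with the factor `(X + s D_q)` acting first. -/
def Fop : ℕ → Module.End F (Polynomial F)
  | 0 => 1
  | n + 1 => (Xop + (q ^ n * s) • Dq) * Fop n

/-! ### Auxiliary lemmas -/

open Polynomial Finset

private abbrev R2 := MvPolynomial (Fin 2) ℚ

private lemma amap_ne_zero {p : R2} (hp : p ≠ 0) : algebraMap R2 F p ≠ 0 := fun hh =>
  hp ((IsFractionRing.to_map_eq_zero_iff (K := F)).mp hh)

private lemma ne_zero_of_eval (p : R2) (v : Fin 2 → ℚ) (hv : MvPolynomial.eval v p ≠ 0) :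
    algebraMap R2 F p ≠ 0 := by
  refine amap_ne_zero fun hh => ?_
  rw [hh] at hv; simp at hv

private lemma qInt_eq (n : ℕ) :
    qInt n = algebraMap R2 F (∑ i ∈ range n, MvPolynomial.X 0 ^ i) := by
  simp [qInt, q, map_sum]

private lemma qInt_ne_zero (n : ℕ) : qInt (n + 1) ≠ 0 := by
  rw [qInt_eq]
  apply ne_zero_of_eval _ (fun _ => 1)
  simp [map_sum]
  positivity

private lemma q_sub_one_ne_zero : q - 1 ≠ 0 := by
  have hq : q - 1 = algebraMap R2 F (MvPolynomial.X 0 - 1) := by simp [q, map_sub]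
  rw [hq]
  apply ne_zero_of_eval _ (fun _ => 0)
  simp

private lemma one_add_q_pow_ne_zero (k : ℕ) : (1 : F) + q ^ (k + 1) ≠ 0 := by
  have hq : (1 : F) + q ^ (k + 1) = algebraMap R2 F (1 + MvPolynomial.X 0 ^ (k + 1)) := by
    simp [q, map_add, map_pow]
  rw [hq]
  apply ne_zero_of_eval _ (fun _ => 1)
  simp

private lemma qFact_ne_zero (n : ℕ) : qFact n ≠ 0 := by
  rw [qFact]
  exact Finset.prod_ne_zero_iff.mpr fun k _ => qInt_ne_zero k

private lemma prodP_ne_zero (j : ℕ) : (∏ i ∈ range j, ((1 : F) + q ^ (i + 1))) ≠ 0 :=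
  Finset.prod_ne_zero_iff.mpr fun k _ => one_add_q_pow_ne_zero k

private lemma qInt_zero : qInt 0 = 0 := by simp [qInt]

private lemma qInt_one : qInt 1 = 1 := by simp [qInt]

private lemma qInt_add (a b : ℕ) : qInt (a + b) = qInt a + q ^ a * qInt b := by
  rw [qInt, qInt, qInt, Finset.sum_range_add, Finset.mul_sum]
  simp [pow_add]

private lemma qInt_two_mul (j : ℕ) : qInt (2 * j) = (1 + q ^ j) * qInt j := by
  rw [two_mul, qInt_add]; ring

private lemma qFact_zero : qFact 0 = 1 := by simp [qFact]

private lemma qFact_succ (n : ℕ) : qFact (n + 1) = qFact n * qInt (n + 1) := by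
  rw [qFact, qFact, Finset.prod_range_succ]

private lemma Dq_X_pow (m : ℕ) :
    Dq (Polynomial.X ^ m : Polynomial F) = C (qInt m) * X ^ (m - 1) := by
  rw [Dq]
  simp only [LinearMap.smul_apply, LinearMap.comp_apply, LinearMap.sub_apply,
    LinearMap.id_apply, AlgHom.toLinearMap_apply, map_pow, aeval_X]
  have h1 : (C q * X : Polynomial F) ^ m - X ^ m = C (q ^ m - 1) * X ^ m := by
    rw [mul_pow, ← C_pow, map_sub, sub_mul, map_one, one_mul]
  rw [h1]
  show (q - 1)⁻¹ • (C (q ^ m - 1) * X ^ m).divX = _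
  rw [divX_C_mul_X_pow]
  cases m with
  | zero => simp [qInt]
  | succ k =>
    simp only [Nat.succ_ne_zero, if_false, smul_eq_C_mul, ← C_mul, Nat.add_sub_cancel]
    have hg : qInt (k + 1) * (q - 1) = q ^ (k + 1) - 1 := geom_sum_mul q (k + 1)
    have hs : (q - 1)⁻¹ * (q ^ (k + 1) - 1) = qInt (k + 1) := by
      rw [inv_mul_eq_iff_eq_mul₀ q_sub_one_ne_zero]
      linear_combination -hg
    rw [← mul_assoc, ← C_mul, hs]

/-- coefficient of `x^{n-2j}` in `h s n`. -/
private def ac (n j : ℕ) : F :=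
  q ^ (j ^ 2) * s ^ j * qFact n /
    ((∏ i ∈ Finset.range j, (1 + q ^ (i + 1))) * qFact j * qFact (n - 2 * j))

private lemma ac_zero (n : ℕ) : ac n 0 = 1 := by
  simp [ac, qFact_zero, div_self (qFact_ne_zero n)]

private lemma key_qInt (m j : ℕ) : qInt (m + 2 * j + 3)
    = qInt (m + 1) + q ^ (m + 1) * ((1 + q ^ (j + 1)) * qInt (j + 1)) := by
  have h1 : m + 2 * j + 3 = (m + 1) + 2 * (j + 1) := by ring
  rw [h1, qInt_add, qInt_two_mul]

set_option maxHeartbeats 2000000 in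
private lemma ac_rec (m j : ℕ) :
    ac (m + 2 * j + 3) (j + 1)
      = ac (m + 2 * j + 2) (j + 1)
        + q ^ (m + 2 * j + 2) * s * qInt (m + 2) * ac (m + 2 * j + 2) j := by
  have e1 : m + 2 * j + 3 - 2 * (j + 1) = m + 1 := by omega
  have e2 : m + 2 * j + 2 - 2 * (j + 1) = m := by omega
  have e3 : m + 2 * j + 2 - 2 * j = m + 2 := by omega
  rw [ac, ac, ac, e1, e2, e3]
  rw [show m + 2 * j + 3 = (m + 2 * j + 2) + 1 from rfl, qFact_succ (m + 2 * j + 2), key_qInt,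
    show m + 2 = (m + 1) + 1 from rfl, qFact_succ (m + 1), qFact_succ m,
    qFact_succ j, prod_range_succ]
  have h2 : q ^ ((j + 1) ^ 2) = q ^ (j ^ 2) * q ^ (2 * j + 1) := by
    rw [← pow_add]; ring_nf
  rw [h2]
  have n1 := qInt_ne_zero m
  have n2 := qInt_ne_zero (m + 1)
  have n3 := qInt_ne_zero j
  have n4 := qFact_ne_zero m
  have n5 := qFact_ne_zero j
  have n6 := prodP_ne_zero j
  have n7 := one_add_q_pow_ne_zero j
  have hD2 : (∏ x ∈ Finset.range j, ((1 : F) + q ^ (x + 1))) * (1 + q ^ (j + 1)) *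
      (qFact j * qInt (j + 1)) * qFact m ≠ 0 :=
    mul_ne_zero (mul_ne_zero (mul_ne_zero n6 n7) (mul_ne_zero n5 n3)) n4
  have hD3 : (∏ i ∈ Finset.range j, ((1 : F) + q ^ (i + 1))) * qFact j *
      (qFact m * qInt (m + 1) * qInt (m + 1 + 1)) ≠ 0 :=
    mul_ne_zero (mul_ne_zero n6 n5) (mul_ne_zero (mul_ne_zero n4 n1) n2)
  have hD1 : (∏ x ∈ Finset.range j, ((1 : F) + q ^ (x + 1))) * (1 + q ^ (j + 1)) *
      (qFact j * qInt (j + 1)) * (qFact m * qInt (m + 1)) ≠ 0 :=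
    mul_ne_zero (mul_ne_zero (mul_ne_zero n6 n7) (mul_ne_zero n5 n3)) (mul_ne_zero n4 n1)
  rw [← mul_div_assoc, div_add_div _ _ hD2 hD3, div_eq_div_iff hD1 (mul_ne_zero hD2 hD3)]
  ring

private lemma ac_rec' (n j : ℕ) (hj : 2 * j + 2 ≤ n) :
    ac (n + 1) (j + 1) = ac n (j + 1) + q ^ n * s * qInt (n - 2 * j) * ac n j := by
  obtain ⟨m, rfl⟩ : ∃ m, n = m + 2 * j + 2 := ⟨n - (2 * j + 2), by omega⟩
  rw [show m + 2 * j + 2 - 2 * j = m + 2 from by omega]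
  exact ac_rec m j

set_option maxHeartbeats 1000000 in
private lemma ac_top (j : ℕ) :
    ac (2 * j + 2) (j + 1) = q ^ (2 * j + 1) * s * qInt 1 * ac (2 * j + 1) j := by
  have e1 : 2 * j + 2 - 2 * (j + 1) = 0 := by omega
  have e2 : 2 * j + 1 - 2 * j = 1 := by omega
  rw [ac, ac, e1, e2, qFact_zero, qInt_one]
  rw [show 2 * j + 2 = (2 * j + 1) + 1 from rfl, qFact_succ (2 * j + 1),
    show (2 : ℕ) * j + 1 + 1 = 2 * (j + 1) from by ring, qInt_two_mul,
    qFact_succ j, prod_range_succ]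
  have h2 : q ^ ((j + 1) ^ 2) = q ^ (j ^ 2) * q ^ (2 * j + 1) := by
    rw [← pow_add]; ring_nf
  rw [h2]
  have n3 := qInt_ne_zero j
  have n5 := qFact_ne_zero j
  have n6 := prodP_ne_zero j
  have n7 := one_add_q_pow_ne_zero j
  rw [show qFact 1 = 1 from by rw [qFact_succ, qFact_zero, qInt_one]; ring]
  have hD1 : (∏ x ∈ Finset.range j, ((1 : F) + q ^ (x + 1))) * (1 + q ^ (j + 1)) *
      (qFact j * qInt (j + 1)) * 1 ≠ 0 := by
    simpa using mul_ne_zero (mul_ne_zero n6 n7) (mul_ne_zero n5 n3)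
  have hD3 : (∏ i ∈ Finset.range j, ((1 : F) + q ^ (i + 1))) * qFact j * 1 ≠ 0 := by
    simpa using mul_ne_zero n6 n5
  rw [← mul_div_assoc, div_eq_div_iff hD1 hD3]
  ring

private lemma expand_term (c a : F) (e : ℕ) :
    (Xop + c • Dq) (Polynomial.C a * Polynomial.X ^ e)
      = C a * X ^ (e + 1) + C (c * qInt e * a) * X ^ (e - 1) := by
  rw [LinearMap.add_apply, LinearMap.smul_apply, Xop, LinearMap.mulLeft_apply,
    ← smul_eq_C_mul, map_smul, Dq_X_pow]
  simp only [smul_eq_C_mul, C_mul]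
  rw [pow_succ]
  ring

private lemma h_eq (N : ℕ) :
    h s N = ∑ j ∈ Finset.range (N / 2 + 1), C (ac N j) * X ^ (N - 2 * j) := rfl

private lemma h_step (n : ℕ) : (Xop + (q ^ n * s) • Dq) (h s n) = h s (n + 1) := by
  rw [h_eq, map_sum, h_eq]
  simp only [expand_term]
  rw [Finset.sum_add_distrib]
  rcases Nat.even_or_odd' n with ⟨m, rfl | rfl⟩
  · -- n = 2 * m
    rw [show 2 * m / 2 = m from by omega, show (2 * m + 1) / 2 = m from by omega]
    rw [Finset.sum_range_succ' (fun j => C (ac (2 * m) j) * X ^ (2 * m - 2 * j + 1)) m,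
      Finset.sum_range_succ
        (fun j => C (q ^ (2 * m) * s * qInt (2 * m - 2 * j) * ac (2 * m) j)
          * X ^ (2 * m - 2 * j - 1)) m,
      Finset.sum_range_succ' (fun j => C (ac (2 * m + 1) j) * X ^ (2 * m + 1 - 2 * j)) m]
    have hz : q ^ (2 * m) * s * qInt (2 * m - 2 * m) * ac (2 * m) m = 0 := by
      rw [show 2 * m - 2 * m = 0 from by omega, qInt_zero]; ring
    rw [hz, map_zero, zero_mul, add_zero]
    have hsum : (∑ j ∈ range m, C (ac (2 * m) (j + 1)) * X ^ (2 * m - 2 * (j + 1) + 1))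
        + (∑ j ∈ range m,
            C (q ^ (2 * m) * s * qInt (2 * m - 2 * j) * ac (2 * m) j) * X ^ (2 * m - 2 * j - 1))
        = ∑ j ∈ range m, C (ac (2 * m + 1) (j + 1)) * X ^ (2 * m + 1 - 2 * (j + 1)) := by
      rw [← Finset.sum_add_distrib]
      refine Finset.sum_congr rfl fun j hj => ?_
      rw [Finset.mem_range] at hj
      rw [ac_rec' (2 * m) j (by omega), C_add, add_mul,
        show 2 * m - 2 * (j + 1) + 1 = 2 * m - 2 * j - 1 from by omega,
        show 2 * m + 1 - 2 * (j + 1) = 2 * m - 2 * j - 1 from by omega]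
    have hc : C (ac (2 * m) 0) * (X : Polynomial F) ^ (2 * m - 2 * 0 + 1)
        = C (ac (2 * m + 1) 0) * X ^ (2 * m + 1 - 2 * 0) := by
      rw [ac_zero, ac_zero, show 2 * m - 2 * 0 + 1 = 2 * m + 1 - 2 * 0 from by omega]
    linear_combination hsum + hc
  · -- n = 2 * m + 1
    rw [show (2 * m + 1) / 2 = m from by omega, show (2 * m + 1 + 1) / 2 = m + 1 from by omega]
    rw [Finset.sum_range_succ'
        (fun j => C (ac (2 * m + 1) j) * X ^ (2 * m + 1 - 2 * j + 1)) m,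
      Finset.sum_range_succ
        (fun j => C (q ^ (2 * m + 1) * s * qInt (2 * m + 1 - 2 * j) * ac (2 * m + 1) j)
          * X ^ (2 * m + 1 - 2 * j - 1)) m,
      Finset.sum_range_succ'
        (fun j => C (ac (2 * m + 1 + 1) j) * X ^ (2 * m + 1 + 1 - 2 * j)) (m + 1),
      Finset.sum_range_succ
        (fun j => C (ac (2 * m + 1 + 1) (j + 1)) * X ^ (2 * m + 1 + 1 - 2 * (j + 1))) m]
    have hsum : (∑ j ∈ range m, C (ac (2 * m + 1) (j + 1)) * X ^ (2 * m + 1 - 2 * (j + 1) + 1))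
        + (∑ j ∈ range m,
            C (q ^ (2 * m + 1) * s * qInt (2 * m + 1 - 2 * j) * ac (2 * m + 1) j)
              * X ^ (2 * m + 1 - 2 * j - 1))
        = ∑ j ∈ range m, C (ac (2 * m + 1 + 1) (j + 1)) * X ^ (2 * m + 1 + 1 - 2 * (j + 1)) := by
      rw [← Finset.sum_add_distrib]
      refine Finset.sum_congr rfl fun j hj => ?_
      rw [Finset.mem_range] at hj
      rw [ac_rec' (2 * m + 1) j (by omega), C_add, add_mul,
        show 2 * m + 1 - 2 * (j + 1) + 1 = 2 * m + 1 - 2 * j - 1 from by omega,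
        show 2 * m + 1 + 1 - 2 * (j + 1) = 2 * m + 1 - 2 * j - 1 from by omega]
    have hc : C (ac (2 * m + 1) 0) * (X : Polynomial F) ^ (2 * m + 1 - 2 * 0 + 1)
        = C (ac (2 * m + 1 + 1) 0) * X ^ (2 * m + 1 + 1 - 2 * 0) := by
      rw [ac_zero, ac_zero, show 2 * m + 1 - 2 * 0 + 1 = 2 * m + 1 + 1 - 2 * 0 from by omega]
    have htop : C (q ^ (2 * m + 1) * s * qInt (2 * m + 1 - 2 * m) * ac (2 * m + 1) m)
          * (X : Polynomial F) ^ (2 * m + 1 - 2 * m - 1)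
        = C (ac (2 * m + 1 + 1) (m + 1)) * X ^ (2 * m + 1 + 1 - 2 * (m + 1)) := by
      rw [show 2 * m + 1 + 1 = 2 * m + 2 from rfl,
        show 2 * m + 1 - 2 * m = 1 from by omega, ac_top,
        show 2 * m + 2 - 2 * (m + 1) = 0 from by omega]
    linear_combination hsum + hc + htop

/- STATEMENT 4: F(n) 1 = h_n(x,s). -/
theorem Fop_apply_one (n : ℕ) : Fop n (1 : Polynomial F) = h s n := by
  induction n with
  | zero =>
    rw [Fop]
    simp only [Module.End.one_apply]
    rw [h_eq]
    simp [ac_zero]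
  | succ k ih =>
    rw [Fop, Module.End.mul_apply, ih, h_step]

end
end

section
/- For every natural number n ≥ 2, the recurrence h_n(x,s) = x · h_{n-1}(x,s) + q^{n-1} s [n-1]_q · h_{n-2}(x,s) holds. -/
noncomputable section

namespace HRecAux

lemma inj : Function.Injective (algebraMap (MvPolynomial (Fin 2) ℚ) F) :=
  IsFractionRing.injective _ _

lemma qInt_ne_zero {n : ℕ} (h : 0 < n) : qInt n ≠ 0 := by
  have : qInt n = algebraMap (MvPolynomial (Fin 2) ℚ) F
      (∑ i ∈ Finset.range n, MvPolynomial.X 0 ^ i) := by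
    simp [qInt, q, map_sum, map_pow]
  rw [this]
  intro h0
  rw [← map_zero (algebraMap (MvPolynomial (Fin 2) ℚ) F)] at h0
  have h1 := inj h0
  have h2 := congrArg (MvPolynomial.eval (fun _ => (1:ℚ))) h1
  simp at h2
  omega

lemma one_add_q_pow_ne_zero (k : ℕ) : (1 : F) + q ^ (k+1) ≠ 0 := by
  have : (1 : F) + q ^ (k+1) = algebraMap (MvPolynomial (Fin 2) ℚ) F
      (1 + MvPolynomial.X 0 ^ (k+1)) := by
    simp [q, map_add, map_pow]
  rw [this]
  intro h0
  rw [← map_zero (algebraMap (MvPolynomial (Fin 2) ℚ) F)] at h0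
  have h1 := inj h0
  have h2 := congrArg (MvPolynomial.eval (fun _ => (1:ℚ))) h1
  simp at h2

lemma qFact_ne_zero (n : ℕ) : qFact n ≠ 0 := by
  rw [qFact]
  exact Finset.prod_ne_zero_iff.mpr fun k _ => qInt_ne_zero k.succ_pos

lemma pi_ne_zero (j : ℕ) : (∏ i ∈ Finset.range j, ((1:F) + q ^ (i + 1))) ≠ 0 :=
  Finset.prod_ne_zero_iff.mpr fun k _ => one_add_q_pow_ne_zero k

lemma qInt_add (a b : ℕ) : qInt (a + b) = qInt a + q ^ a * qInt b := by
  rw [qInt, qInt, qInt, Finset.sum_range_add, Finset.mul_sum]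
  simp [pow_add]

lemma qFact_succ (n : ℕ) : qFact (n+1) = qFact n * qInt (n+1) := by
  rw [qFact, qFact, Finset.prod_range_succ]

/-- coefficient of `x^{n-2j}` in `h s n` -/
def cf (n j : ℕ) : F := q ^ (j ^ 2) * s ^ j * qFact n /
    ((∏ i ∈ Finset.range j, (1 + q ^ (i + 1))) * qFact j * qFact (n - 2 * j))

lemma qFact_zero : qFact 0 = 1 := by rw [qFact]; simp

lemma cf_zero (n : ℕ) : cf n 0 = 1 := by
  simp [cf, qFact_zero, div_self (qFact_ne_zero n)]

set_option maxHeartbeats 1000000 in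
lemma key1 (d i : ℕ) :
    cf (2*i+d+3) (i+1) = cf (2*i+d+2) (i+1) +
      (q ^ (2*i+d+2) * s * qInt (2*i+d+2)) * cf (2*i+d+1) i := by
  have e1 : 2*i+d+3 - 2*(i+1) = d+1 := by omega
  have e2 : 2*i+d+2 - 2*(i+1) = d := by omega
  have e3 : 2*i+d+1 - 2*i = d+1 := by omega
  rw [cf, cf, cf, e1, e2, e3]
  have fI : qFact (i+1) = qFact i * qInt (i+1) := qFact_succ i
  have fD : qFact (d+1) = qFact d * qInt (d+1) := qFact_succ d
  have f2 : qFact (2*i+d+2) = qFact (2*i+d+1) * qInt (2*i+d+2) := qFact_succ (2*i+d+1)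
  have f3 : qFact (2*i+d+3) = qFact (2*i+d+1) * qInt (2*i+d+2) * qInt (2*i+d+3) := by
    rw [← f2]; exact qFact_succ (2*i+d+2)
  have hP : (∏ x ∈ Finset.range (i+1), ((1:F) + q ^ (x + 1)))
      = (∏ x ∈ Finset.range i, ((1:F) + q ^ (x + 1))) * (1 + q ^ (i+1)) :=
    Finset.prod_range_succ _ _
  have hq : q ^ ((i+1)^2) = q ^ (i^2) * q ^ (2*i+1) := by
    rw [← pow_add]; ring_nf
  have hs : s ^ (i+1) = s ^ i * s := pow_succ s i
  have hE : qInt (2*i+d+3) = qInt (d+1) + q^(d+1) * ((1 + q^(i+1)) * qInt (i+1)) := by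
    have h1 : 2*i+d+3 = (d+1) + ((i+1) + (i+1)) := by omega
    rw [h1, qInt_add (d+1) (i+1+(i+1)), qInt_add (i+1) (i+1)]
    ring
  have n1 : qFact i ≠ 0 := qFact_ne_zero i
  have n2 : qFact d ≠ 0 := qFact_ne_zero d
  have n3 : qFact (2*i+d+1) ≠ 0 := qFact_ne_zero _
  have n4 : qInt (i+1) ≠ 0 := qInt_ne_zero (Nat.succ_pos i)
  have n5 : qInt (d+1) ≠ 0 := qInt_ne_zero (Nat.succ_pos d)
  have n6 : (∏ x ∈ Finset.range i, ((1:F) + q ^ (x + 1))) ≠ 0 := pi_ne_zero i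
  have n7 : (1:F) + q ^ (i+1) ≠ 0 := one_add_q_pow_ne_zero i
  rw [fI, fD, f3, f2, hP, hq, hs, hE]
  clear fI fD f2 f3 hP hq hs hE e1 e2 e3
  generalize ((1:F) + q ^ (i+1)) = W at n7 ⊢
  generalize (∏ x ∈ Finset.range i, ((1:F) + q ^ (x + 1))) = P at n6 ⊢
  generalize qFact i = Fi at n1 ⊢
  generalize qFact d = Fd at n2 ⊢
  generalize qFact (2*i+d+1) = G at n3 ⊢
  generalize qInt (i+1) = Ii at n4 ⊢
  generalize qInt (d+1) = Id at n5 ⊢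
  generalize qInt (2*i+d+2) = I2
  have h1 : P * W * (Fi * Ii) * Fd ≠ 0 :=
    mul_ne_zero (mul_ne_zero (mul_ne_zero n6 n7) (mul_ne_zero n1 n4)) n2
  have h2 : P * Fi * (Fd * Id) ≠ 0 :=
    mul_ne_zero (mul_ne_zero n6 n1) (mul_ne_zero n2 n5)
  have hL : P * W * (Fi * Ii) * (Fd * Id) ≠ 0 :=
    mul_ne_zero (mul_ne_zero (mul_ne_zero n6 n7) (mul_ne_zero n1 n4)) (mul_ne_zero n2 n5)
  rw [← mul_div_assoc, div_add_div _ _ h1 h2, div_eq_div_iff hL (mul_ne_zero h1 h2)]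
  ring

set_option maxHeartbeats 1000000 in
lemma key2 (i : ℕ) :
    cf (2*i+2) (i+1) = (q ^ (2*i+1) * s * qInt (2*i+1)) * cf (2*i) i := by
  have e1 : 2*i+2 - 2*(i+1) = 0 := by omega
  have e2 : 2*i - 2*i = 0 := by omega
  rw [cf, cf, e1, e2]
  have fI : qFact (i+1) = qFact i * qInt (i+1) := qFact_succ i
  have f2 : qFact (2*i+2) = qFact (2*i) * qInt (2*i+1) * qInt (2*i+2) := by
    rw [show 2*i+2 = (2*i+1)+1 from rfl, qFact_succ, qFact_succ]
  have hP : (∏ x ∈ Finset.range (i+1), ((1:F) + q ^ (x + 1)))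
      = (∏ x ∈ Finset.range i, ((1:F) + q ^ (x + 1))) * (1 + q ^ (i+1)) :=
    Finset.prod_range_succ _ _
  have hq : q ^ ((i+1)^2) = q ^ (i^2) * q ^ (2*i+1) := by
    rw [← pow_add]; ring_nf
  have hs : s ^ (i+1) = s ^ i * s := pow_succ s i
  have hE : qInt (2*i+2) = qInt (i+1) + q^(i+1) * qInt (i+1) := by
    have h1 : 2*i+2 = (i+1) + (i+1) := by omega
    rw [h1, qInt_add (i+1) (i+1)]
  have n1 : qFact i ≠ 0 := qFact_ne_zero i
  have n2 : qFact (2*i) ≠ 0 := qFact_ne_zero _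
  have n4 : qInt (i+1) ≠ 0 := qInt_ne_zero (Nat.succ_pos i)
  have n6 : (∏ x ∈ Finset.range i, ((1:F) + q ^ (x + 1))) ≠ 0 := pi_ne_zero i
  have n7 : (1:F) + q ^ (i+1) ≠ 0 := one_add_q_pow_ne_zero i
  rw [qFact_zero, fI, f2, hP, hq, hs, hE]
  clear fI f2 hP hq hs hE e1 e2
  generalize q ^ (i+1) = Qi at n7 ⊢
  generalize (∏ x ∈ Finset.range i, ((1:F) + q ^ (x + 1))) = P at n6 ⊢
  generalize qFact i = Fi at n1 ⊢
  generalize qFact (2*i) = G at n2 ⊢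
  generalize qInt (i+1) = Ii at n4 ⊢
  generalize qInt (2*i+1) = I1
  field_simp


end HRecAux

open HRecAux Polynomial in
lemma h_spec (n : ℕ) :
    h s n = ∑ j ∈ Finset.range (n / 2 + 1), C (cf n j) * X ^ (n - 2 * j) := rfl

set_option maxHeartbeats 1000000 in
open HRecAux Polynomial in
/- STATEMENT 7: h_n(x,s) = x h_{n-1}(x,s) + q^{n-1} s [n-1]_q h_{n-2}(x,s) for n ≥ 2. -/
theorem h_recurrence (n : ℕ) (hn : 2 ≤ n) :
    h s n =
      Polynomial.X * h s (n - 1) +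
        Polynomial.C (q ^ (n - 1) * s * qInt (n - 1)) * h s (n - 2) := by
  rcases Nat.even_or_odd n with ⟨t, ht⟩ | ⟨t, ht⟩
  · -- even case : n = 2*m+2
    obtain ⟨m, rfl⟩ : ∃ m, t = m + 1 := ⟨t - 1, by omega⟩
    subst ht
    simp only [show m + 1 + (m + 1) = 2 * m + 2 from by omega,
      show 2 * m + 2 - 1 = 2 * m + 1 from by omega,
      show 2 * m + 2 - 2 = 2 * m from by omega]
    have EL : h s (2 * m + 2) =
        (∑ j ∈ Finset.range m, C (cf (2 * m + 2) (j + 1)) * X ^ (2 * m - 2 * j))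
          + (C (cf (2 * m + 2) (m + 1)) + C (cf (2 * m + 2) 0) * X ^ (2 * m + 2)) := by
      rw [h_spec, show (2 * m + 2) / 2 + 1 = (m + 1) + 1 from by omega,
        Finset.sum_range_succ', Finset.sum_range_succ,
        show 2 * m + 2 - 2 * (m + 1) = 0 from by omega,
        show 2 * m + 2 - 2 * 0 = 2 * m + 2 from by omega, pow_zero, mul_one]
      rw [Finset.sum_congr rfl fun j hj => by
        rw [show 2 * m + 2 - 2 * (j + 1) = 2 * m - 2 * j from by omega]]
      ring
    have E1 : X * h s (2 * m + 1) =
        (∑ j ∈ Finset.range m, C (cf (2 * m + 1) (j + 1)) * X ^ (2 * m - 2 * j))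
          + C (cf (2 * m + 1) 0) * X ^ (2 * m + 2) := by
      rw [h_spec, show (2 * m + 1) / 2 + 1 = m + 1 from by omega, Finset.sum_range_succ',
        mul_add, Finset.mul_sum]
      refine congrArg₂ (· + ·) ?_ ?_
      · refine Finset.sum_congr rfl fun j hj => ?_
        have hj' := Finset.mem_range.mp hj
        have e : 2 * m + 1 - 2 * (j + 1) + 1 = 2 * m - 2 * j := by omega
        rw [mul_comm Polynomial.X, mul_assoc, ← pow_succ, e]
      · have e : 2 * m + 1 - 2 * 0 + 1 = 2 * m + 2 := by omega
        rw [mul_comm Polynomial.X, mul_assoc, ← pow_succ, e]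
    have E2 : C (q ^ (2 * m + 1) * s * qInt (2 * m + 1)) * h s (2 * m) =
        (∑ j ∈ Finset.range m,
          C (q ^ (2 * m + 1) * s * qInt (2 * m + 1) * cf (2 * m) j) * X ^ (2 * m - 2 * j))
          + C (q ^ (2 * m + 1) * s * qInt (2 * m + 1) * cf (2 * m) m) := by
      rw [h_spec, show (2 * m) / 2 + 1 = m + 1 from by omega, Finset.sum_range_succ,
        show 2 * m - 2 * m = 0 from by omega, pow_zero, mul_one, mul_add, Finset.mul_sum,
        ← Polynomial.C_mul]
      congr 1
      refine Finset.sum_congr rfl fun j hj => ?_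
      rw [← mul_assoc, ← Polynomial.C_mul]
    rw [EL, E1, E2]
    have hS : (∑ j ∈ Finset.range m, C (cf (2 * m + 2) (j + 1)) * X ^ (2 * m - 2 * j))
        = (∑ j ∈ Finset.range m, C (cf (2 * m + 1) (j + 1)) * X ^ (2 * m - 2 * j))
          + (∑ j ∈ Finset.range m,
            C (q ^ (2 * m + 1) * s * qInt (2 * m + 1) * cf (2 * m) j) * X ^ (2 * m - 2 * j)) := by
      rw [← Finset.sum_add_distrib]
      refine Finset.sum_congr rfl fun j hj => ?_
      have hj' := Finset.mem_range.mp hj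
      rw [← add_mul, ← Polynomial.C_add]
      have hk := key1 (2 * (m - 1 - j) + 1) j
      rw [show 2 * j + (2 * (m - 1 - j) + 1) + 3 = 2 * m + 2 from by omega,
        show 2 * j + (2 * (m - 1 - j) + 1) + 2 = 2 * m + 1 from by omega,
        show 2 * j + (2 * (m - 1 - j) + 1) + 1 = 2 * m from by omega] at hk
      rw [hk]
    have hTop : cf (2 * m + 2) 0 = cf (2 * m + 1) 0 := by rw [cf_zero, cf_zero]
    have hBot : cf (2 * m + 2) (m + 1)
        = q ^ (2 * m + 1) * s * qInt (2 * m + 1) * cf (2 * m) m := key2 m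
    rw [hS, hTop, hBot]
    ring
  · -- odd case : n = 2*m+3
    obtain ⟨m, rfl⟩ : ∃ m, t = m + 1 := ⟨t - 1, by omega⟩
    subst ht
    simp only [show 2 * (m + 1) + 1 = 2 * m + 3 from by omega,
      show 2 * m + 3 - 1 = 2 * m + 2 from by omega,
      show 2 * m + 3 - 2 = 2 * m + 1 from by omega]
    have EL : h s (2 * m + 3) =
        (∑ j ∈ Finset.range (m + 1), C (cf (2 * m + 3) (j + 1)) * X ^ (2 * m + 1 - 2 * j))
          + C (cf (2 * m + 3) 0) * X ^ (2 * m + 3) := by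
      rw [h_spec, show (2 * m + 3) / 2 + 1 = (m + 1) + 1 from by omega, Finset.sum_range_succ',
        show 2 * m + 3 - 2 * 0 = 2 * m + 3 from by omega]
      rw [Finset.sum_congr rfl fun j hj => by
        rw [show 2 * m + 3 - 2 * (j + 1) = 2 * m + 1 - 2 * j from by omega]]
    have E1 : X * h s (2 * m + 2) =
        (∑ j ∈ Finset.range (m + 1), C (cf (2 * m + 2) (j + 1)) * X ^ (2 * m + 1 - 2 * j))
          + C (cf (2 * m + 2) 0) * X ^ (2 * m + 3) := by
      rw [h_spec, show (2 * m + 2) / 2 + 1 = (m + 1) + 1 from by omega, Finset.sum_range_succ',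
        mul_add, Finset.mul_sum]
      congr 1
      · refine Finset.sum_congr rfl fun j hj => ?_
        have hj' := Finset.mem_range.mp hj
        have e : 2 * m + 2 - 2 * (j + 1) + 1 = 2 * m + 1 - 2 * j := by omega
        rw [mul_comm Polynomial.X, mul_assoc, ← pow_succ, e]
      · have e : 2 * m + 2 - 2 * 0 + 1 = 2 * m + 3 := by omega
        rw [mul_comm Polynomial.X, mul_assoc, ← pow_succ, e]
    have E2 : C (q ^ (2 * m + 2) * s * qInt (2 * m + 2)) * h s (2 * m + 1) =
        ∑ j ∈ Finset.range (m + 1),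
          C (q ^ (2 * m + 2) * s * qInt (2 * m + 2) * cf (2 * m + 1) j)
            * X ^ (2 * m + 1 - 2 * j) := by
      rw [h_spec, show (2 * m + 1) / 2 + 1 = m + 1 from by omega, Finset.mul_sum]
      refine Finset.sum_congr rfl fun j hj => ?_
      rw [← mul_assoc, ← Polynomial.C_mul]
    rw [EL, E1, E2]
    have hS : (∑ j ∈ Finset.range (m + 1), C (cf (2 * m + 3) (j + 1)) * X ^ (2 * m + 1 - 2 * j))
        = (∑ j ∈ Finset.range (m + 1), C (cf (2 * m + 2) (j + 1)) * X ^ (2 * m + 1 - 2 * j))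
          + (∑ j ∈ Finset.range (m + 1),
            C (q ^ (2 * m + 2) * s * qInt (2 * m + 2) * cf (2 * m + 1) j)
              * X ^ (2 * m + 1 - 2 * j)) := by
      rw [← Finset.sum_add_distrib]
      refine Finset.sum_congr rfl fun j hj => ?_
      have hj' := Finset.mem_range.mp hj
      rw [← add_mul, ← Polynomial.C_add]
      have hk := key1 (2 * (m - j)) j
      rw [show 2 * j + 2 * (m - j) + 3 = 2 * m + 3 from by omega,
        show 2 * j + 2 * (m - j) + 2 = 2 * m + 2 from by omega,
        show 2 * j + 2 * (m - j) + 1 = 2 * m + 1 from by omega] at hk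
      rw [hk]
    have hTop : cf (2 * m + 3) 0 = cf (2 * m + 2) 0 := by rw [cf_zero, cf_zero]
    rw [hS, hTop]
    ring


end
end

section
/- For every natural number n ≥ 1, the polynomials h_n satisfy the recurrence h_n(x,s) = x · h_{n-1}(x,q²s) + q s · (D_q h_{n-1})(x,q²s), where h_{n-1}(x,q²s) denotes h_{n-1} with the parameter s replaced by q²s. -/
noncomputable section

namespace HRec

lemma alg_inj : Function.Injective (algebraMap (MvPolynomial (Fin 2) ℚ) F) :=
  IsFractionRing.injective _ _

lemma algMap_ne_zero {p : MvPolynomial (Fin 2) ℚ} (hp : p ≠ 0) :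
    algebraMap (MvPolynomial (Fin 2) ℚ) F p ≠ 0 :=
  fun hh => hp (alg_inj (by rw [hh, map_zero]))

lemma q_sub_one_ne : q - 1 ≠ 0 := by
  have h1 : q - 1 = algebraMap (MvPolynomial (Fin 2) ℚ) F (MvPolynomial.X 0 - 1) := by
    simp [q, map_sub]
  rw [h1]
  apply algMap_ne_zero
  intro hh
  have := congrArg (MvPolynomial.eval (fun _ => (0:ℚ))) hh
  simp at this

lemma qInt_eq (n : ℕ) :
    qInt n = algebraMap (MvPolynomial (Fin 2) ℚ) F (∑ i ∈ Finset.range n, MvPolynomial.X 0 ^ i) := by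
  simp [qInt, q, map_sum, map_pow]

lemma qInt_ne_zero (k : ℕ) : qInt (k + 1) ≠ 0 := by
  rw [qInt_eq]
  apply algMap_ne_zero
  intro hh
  have := congrArg (MvPolynomial.eval (fun _ => (0:ℚ))) hh
  simp [Finset.sum_range_succ'] at this

lemma one_add_q_pow_ne_zero (i : ℕ) : (1 : F) + q ^ (i + 1) ≠ 0 := by
  have h1 : (1:F) + q ^ (i+1)
      = algebraMap (MvPolynomial (Fin 2) ℚ) F (1 + MvPolynomial.X 0 ^ (i+1)) := by
    simp [q, map_add, map_pow]
  rw [h1]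
  apply algMap_ne_zero
  intro hh
  have := congrArg (MvPolynomial.eval (fun _ => (0:ℚ))) hh
  simp at this

lemma qFact_ne_zero (n : ℕ) : qFact n ≠ 0 :=
  Finset.prod_ne_zero_iff.mpr fun k _ => qInt_ne_zero k

def P (j : ℕ) : F := ∏ i ∈ Finset.range j, (1 + q ^ (i + 1))

lemma P_ne_zero (j : ℕ) : P j ≠ 0 :=
  Finset.prod_ne_zero_iff.mpr fun i _ => one_add_q_pow_ne_zero i

lemma P_succ (j : ℕ) : P (j + 1) = P j * (1 + q ^ (j + 1)) := Finset.prod_range_succ _ _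

lemma qFact_succ (n : ℕ) : qFact (n + 1) = qFact n * qInt (n + 1) := Finset.prod_range_succ _ _

lemma qInt_add (a b : ℕ) : qInt (a + b) = qInt a + q ^ a * qInt b := by
  simp [qInt, Finset.sum_range_add, pow_add, Finset.mul_sum]

lemma Dq_C_mul_X_pow (a : F) (k : ℕ) :
    Dq (Polynomial.C a * Polynomial.X ^ k) =
      Polynomial.C (a * qInt k) * Polynomial.X ^ (k - 1) := by
  have hg : (q - 1)⁻¹ * (a * (q ^ k - 1)) = a * qInt k := by
    have hgg : qInt k * (q - 1) = q ^ k - 1 := geom_sum_mul q k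
    rw [← hgg]
    field_simp [q_sub_one_ne]
  simp only [Dq, LinearMap.smul_apply, LinearMap.comp_apply, LinearMap.sub_apply,
    AlgHom.toLinearMap_apply, LinearMap.id_apply, map_mul, map_pow, Polynomial.aeval_C,
    Polynomial.aeval_X]
  have hcomb : (algebraMap F (Polynomial F)) a * (Polynomial.C q * Polynomial.X) ^ k
      - Polynomial.C a * Polynomial.X ^ k
      = Polynomial.C (a * (q ^ k - 1)) * Polynomial.X ^ k := by
    rw [mul_pow, ← Polynomial.C_pow, Polynomial.algebraMap_eq, mul_sub, mul_one, map_sub, map_mul]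
    ring
  rw [hcomb]
  show (q-1)⁻¹ • Polynomial.divX (Polynomial.C (a * (q ^ k - 1)) * Polynomial.X ^ k) = _
  rw [Polynomial.divX_C_mul_X_pow]
  rcases k with _ | k
  · simp [qInt]
  · simp only [Nat.succ_ne_zero, if_false]
    rw [Polynomial.smul_eq_C_mul, ← mul_assoc, ← Polynomial.C_mul, hg, Polynomial.C_mul]

def cc (n : ℕ) (t : F) (j : ℕ) : F :=
  q ^ (j ^ 2) * t ^ j * qFact n / (P j * qFact j * qFact (n - 2 * j))

lemma h_eq (t : F) (n : ℕ) :
    h t n = ∑ j ∈ Finset.range (n / 2 + 1),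
      Polynomial.C (cc n t j) * Polynomial.X ^ (n - 2 * j) := rfl

lemma qFact_zero : qFact 0 = 1 := Finset.prod_range_zero _

lemma qInt_one : qInt 1 = 1 := by simp [qInt]

lemma qFact_one : qFact 1 = 1 := by simp [qFact, qInt]

lemma cc_zero (n : ℕ) (t : F) : cc n t 0 = 1 := by
  simp [cc, P, qFact_zero, div_self (qFact_ne_zero n)]

lemma qInt_decomp (j a : ℕ) :
    qInt (2*j+3+a) = (1 + q^(j+1)) * qInt (j+1) + q^(2*j+2) * qInt (a+1) := by
  have e : 2*j+3+a = (j+1) + ((j+1) + (a+1)) := by omega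
  have e2 : 2*j+2 = (j+1)+(j+1) := by omega
  rw [e, qInt_add (j+1) ((j+1)+(a+1)), qInt_add (j+1) (a+1), e2, pow_add]
  ring

lemma div3 {x y z d1 d2 d3 : F} (h1 : d1 ≠ 0) (h2 : d2 ≠ 0) (h3 : d3 ≠ 0)
    (hh : x * (d2 * d3) = y * (d1 * d3) + z * (d1 * d2)) :
    x / d1 = y / d2 + z / d3 := by
  rw [div_add_div _ _ h2 h3, div_eq_div_iff h1 (mul_ne_zero h2 h3)]
  linear_combination hh

lemma key (j a : ℕ) :
    cc (2*j+3+a) s (j+1)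
      = cc (2*j+2+a) (q^2*s) (j+1) + q * s * cc (2*j+2+a) (q^2*s) j * qInt (a+2) := by
  have e1 : 2*j+3+a - 2*(j+1) = a+1 := by omega
  have e2 : 2*j+2+a - 2*(j+1) = a := by omega
  have e3 : 2*j+2+a - 2*j = a+2 := by omega
  have f1 : qFact (2*j+3+a)
      = qFact (2*j+2+a) * ((1 + q^(j+1)) * qInt (j+1) + q^(2*j+2) * qInt (a+1)) := by
    have e : 2*j+3+a = (2*j+2+a)+1 := by omega
    rw [e, qFact_succ, show 2*j+2+a+1 = 2*j+3+a from by omega, qInt_decomp]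
  have f2 : qFact (a+2) = qFact a * qInt (a+1) * qInt (a+2) := by
    rw [show a+2 = (a+1)+1 from by omega, qFact_succ, qFact_succ]
  have f3 : qFact (a+1) = qFact a * qInt (a+1) := qFact_succ a
  have f4 : qFact (j+1) = qFact j * qInt (j+1) := qFact_succ j
  simp only [cc, e1, e2, e3, f1, f2, f3, f4, P_succ]
  rw [← mul_div_assoc, div_mul_eq_mul_div]
  apply div3
  · repeat' apply mul_ne_zero
    all_goals first
      | exact P_ne_zero j | exact one_add_q_pow_ne_zero j | exact qFact_ne_zero _
      | exact qInt_ne_zero j | exact qInt_ne_zero a | exact qInt_ne_zero (a+1)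
  · repeat' apply mul_ne_zero
    all_goals first
      | exact P_ne_zero j | exact one_add_q_pow_ne_zero j | exact qFact_ne_zero _
      | exact qInt_ne_zero j | exact qInt_ne_zero a | exact qInt_ne_zero (a+1)
  · repeat' apply mul_ne_zero
    all_goals first
      | exact P_ne_zero j | exact one_add_q_pow_ne_zero j | exact qFact_ne_zero _
      | exact qInt_ne_zero j | exact qInt_ne_zero a | exact qInt_ne_zero (a+1)
  · ring

lemma key2 (k : ℕ) :
    cc (2*k+2) s (k+1) = q * s * cc (2*k+1) (q^2*s) k * qInt 1 := by
  have e1 : 2*k+2 - 2*(k+1) = 0 := by omega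
  have e2 : 2*k+1 - 2*k = 1 := by omega
  have f1 : qFact (2*k+2) = qFact (2*k+1) * ((1 + q^(k+1)) * qInt (k+1)) := by
    rw [show 2*k+2 = (2*k+1)+1 from by omega, qFact_succ,
      show 2*k+1+1 = (k+1)+(k+1) from by omega, qInt_add]
    ring
  have f4 : qFact (k+1) = qFact k * qInt (k+1) := qFact_succ k
  have hq1 : qInt 1 = 1 := qInt_one
  simp only [cc, e1, e2, f1, f4, P_succ, hq1, qFact_zero, qFact_one]
  rw [← mul_div_assoc, div_mul_eq_mul_div, mul_one, div_eq_div_iff]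
  · ring
  · repeat' apply mul_ne_zero
    all_goals first
      | exact P_ne_zero k | exact one_add_q_pow_ne_zero k | exact qFact_ne_zero _
      | exact qInt_ne_zero k | exact one_ne_zero
  · repeat' apply mul_ne_zero
    all_goals first
      | exact P_ne_zero k | exact one_add_q_pow_ne_zero k | exact qFact_ne_zero _
      | exact qInt_ne_zero k | exact one_ne_zero

def Af (m j : ℕ) : Polynomial F :=
  Polynomial.C (cc (m+1) s j) * Polynomial.X ^ (m+1-2*j)

def Bf (m j : ℕ) : Polynomial F :=
  Polynomial.C (cc m (q^2*s) j) * Polynomial.X ^ (m+1-2*j)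

def Gf (m j : ℕ) : Polynomial F :=
  Polynomial.C (q * s * cc m (q^2*s) j * qInt (m-2*j)) * Polynomial.X ^ (m+1-2*(j+1))

lemma tkey (N j : ℕ) (hN : 2*(j+1) ≤ N) : Af N (j+1) = Bf N (j+1) + Gf N j := by
  obtain ⟨a, ha⟩ : ∃ a, N = 2*j+2+a := ⟨N - (2*j+2), by omega⟩
  subst ha
  simp only [Af, Bf, Gf]
  rw [show 2*j+2+a+1 = 2*j+3+a from by omega, show 2*j+2+a-2*j = a+2 from by omega,
    key j a, Polynomial.C_add, add_mul]

lemma AB0 (m : ℕ) : Af m 0 = Bf m 0 := by simp only [Af, Bf, cc_zero]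

lemma sums_eq (m : ℕ) :
    ∑ j ∈ Finset.range ((m+1)/2+1), Af m j
      = ∑ j ∈ Finset.range (m/2+1), Bf m j + ∑ j ∈ Finset.range (m/2+1), Gf m j := by
  rcases Nat.even_or_odd m with ⟨k, rfl⟩ | ⟨k, rfl⟩
  · rw [show (k+k+1)/2+1 = k+1 from by omega, show (k+k)/2+1 = k+1 from by omega]
    have hG : Gf (k+k) k = 0 := by
      have h0 : k+k-2*k = 0 := by omega
      simp [Gf, h0, qInt]
    have hterm : ∀ j ∈ Finset.range k, Af (k+k) (j+1) = Bf (k+k) (j+1) + Gf (k+k) j :=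
      fun j hj => tkey (k+k) j (by have := Finset.mem_range.mp hj; omega)
    rw [Finset.sum_range_succ' (Af (k+k)) k, Finset.sum_range_succ' (Bf (k+k)) k,
      Finset.sum_range_succ (Gf (k+k)) k, hG, add_zero, AB0,
      Finset.sum_congr rfl hterm, Finset.sum_add_distrib]
    ring
  · rw [show (2*k+1+1)/2+1 = k+2 from by omega, show (2*k+1)/2+1 = k+1 from by omega]
    have hAG : Af (2*k+1) (k+1) = Gf (2*k+1) k := by
      have h1 : 2*k+1-2*k = 1 := by omega
      have h2 : 2*k+1+1 = 2*k+2 := by omega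
      simp only [Af, Gf, h1, h2, key2 k, qInt_one]
    have hterm : ∀ j ∈ Finset.range k, Af (2*k+1) (j+1) = Bf (2*k+1) (j+1) + Gf (2*k+1) j :=
      fun j hj => tkey (2*k+1) j (by have := Finset.mem_range.mp hj; omega)
    rw [Finset.sum_range_succ (Af (2*k+1)) (k+1), Finset.sum_range_succ (Gf (2*k+1)) k,
      Finset.sum_range_succ' (Af (2*k+1)) k, Finset.sum_range_succ' (Bf (2*k+1)) k,
      hAG, AB0, Finset.sum_congr rfl hterm, Finset.sum_add_distrib]
    ring

end HRec

/- STATEMENT 12: h_n(x,s) = x h_{n-1}(x,q²s) + q s (D_q h_{n-1})(x,q²s) for n ≥ 1. -/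
theorem h_recurrence_q2 (n : ℕ) (hn : 1 ≤ n) :
    h s n =
      Polynomial.X * h (q ^ 2 * s) (n - 1) +
        Polynomial.C (q * s) * Dq (h (q ^ 2 * s) (n - 1)) := by
  obtain ⟨m, rfl⟩ : ∃ m, n = m + 1 := ⟨n - 1, by omega⟩
  simp only [Nat.add_sub_cancel]
  rw [HRec.h_eq, HRec.h_eq]
  have hX : Polynomial.X * ∑ j ∈ Finset.range (m/2+1),
      Polynomial.C (HRec.cc m (q^2*s) j) * Polynomial.X ^ (m - 2*j)
      = ∑ j ∈ Finset.range (m/2+1),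
        Polynomial.C (HRec.cc m (q^2*s) j) * Polynomial.X ^ (m+1 - 2*j) := by
    rw [Finset.mul_sum]
    refine Finset.sum_congr rfl fun j hj => ?_
    have hj' : m - 2*j + 1 = m + 1 - 2*j := by
      have := Finset.mem_range.mp hj; omega
    rw [← hj', pow_succ]
    ring
  have hD : Polynomial.C (q*s) * Dq (∑ j ∈ Finset.range (m/2+1),
      Polynomial.C (HRec.cc m (q^2*s) j) * Polynomial.X ^ (m - 2*j))
      = ∑ j ∈ Finset.range (m/2+1),
        Polynomial.C (q * s * HRec.cc m (q^2*s) j * qInt (m - 2*j))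
          * Polynomial.X ^ (m+1 - 2*(j+1)) := by
    rw [map_sum, Finset.mul_sum]
    refine Finset.sum_congr rfl fun j hj => ?_
    have he : m - 2*j - 1 = m + 1 - 2*(j+1) := by
      have := Finset.mem_range.mp hj; omega
    rw [HRec.Dq_C_mul_X_pow, he, ← mul_assoc, ← Polynomial.C_mul, ← mul_assoc]
  rw [hX, hD]
  exact HRec.sums_eq m

end
end
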